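/- Fix an integer N ≥ 1 and consider the polynomial ring ℂ[y_{ij} : 1 ≤ i ≤ j ≤ N], with the convention y_{ji} := y_{ij} for i ≤ j (coordinates on symmetric N×N matrices). Let (P_{ab}) be the antisymmetric family of polynomials determined on generators by P(y_{ij}, y_{lm}) = (sign(m−i) + sign(l−j))·y_{il}y_{jm} + (sign(l−i) + sign(m−j))·y_{im}y_{jl}, where sign(k) ∈ {−1,0,1} is the sign of the integer k. Then the associated bracket {f,g} = Σ_{a,b} P_{ab}·(∂f/∂x_a)·(∂g/∂x_b) satisfies the Jacobi identity for all polynomials f, g, h, i.e. it is a Poisson bracket. (This is the Poisson structure of §5.5 of the paper, arising from the C-type compact Hermitian symmetric space Sp_{2N}-flag variety; it is the quasiclassical limit of Noumi's algebra of quantum symmetric matrices.) -/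

import Mathlib

open MvPolynomial

/-- The bracket on a multivariate polynomial ring associated to a family of
polynomials `P a b`: `{f, g} = Σ_{a,b} P a b · ∂f/∂x_a · ∂g/∂x_b`. -/
noncomputable def polyBracket {σ : Type*} [Fintype σ]
    (P : σ → σ → MvPolynomial σ ℂ) (f g : MvPolynomial σ ℂ) : MvPolynomial σ ℂ :=
  ∑ a : σ, ∑ b : σ, P a b * pderiv a f * pderiv b g

namespace StmtC

/-- Index set for the variables `y_{ij}`, `1 ≤ i ≤ j ≤ N` (coordinates on
symmetric `N × N` matrices). -/
abbrev Idx (N : ℕ) := {p : Fin N × Fin N // p.1 ≤ p.2}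

variable {N : ℕ}

/-- The variable `y_{ij}`, with the convention `y_{ji} = y_{ij}` for `i ≤ j`. -/
noncomputable def y (i j : Fin N) : MvPolynomial (Idx N) ℂ :=
  if h : i ≤ j then X ⟨(i, j), h⟩ else X ⟨(j, i), le_of_not_ge h⟩

/-- `sg i j` is the sign of `j - i`. -/
def sg (i j : Fin N) : ℂ := if i < j then 1 else if j < i then -1 else 0

/-- The antisymmetric family of polynomials determined on generators by
`P(y_{ij}, y_{lm}) = (sign(m−i) + sign(l−j))·y_{il}y_{jm} + (sign(l−i) + sign(m−j))·y_{im}y_{jl}`. -/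
noncomputable def P (a b : Idx N) : MvPolynomial (Idx N) ℂ :=
  C (sg a.1.1 b.1.2 + sg a.1.2 b.1.1) * y a.1.1 b.1.1 * y a.1.2 b.1.2 +
    C (sg a.1.1 b.1.1 + sg a.1.2 b.1.2) * y a.1.1 b.1.2 * y a.1.2 b.1.1

end StmtC

namespace PBAux
set_option linter.unusedSectionVars false
variable {σ : Type*} [Fintype σ] [DecidableEq σ] (P : σ → σ → MvPolynomial σ ℂ)

lemma pB_zero_right (f : MvPolynomial σ ℂ) : polyBracket P f 0 = 0 := by
  simp [polyBracket]

lemma pB_add_left (f g h : MvPolynomial σ ℂ) :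
    polyBracket P (f + g) h = polyBracket P f h + polyBracket P g h := by
  simp [polyBracket, map_add, add_mul, mul_add, Finset.sum_add_distrib]

lemma pB_add_right (f g h : MvPolynomial σ ℂ) :
    polyBracket P f (g + h) = polyBracket P f g + polyBracket P f h := by
  simp [polyBracket, map_add, add_mul, mul_add, Finset.sum_add_distrib]

lemma pB_C_left (c : ℂ) (g : MvPolynomial σ ℂ) : polyBracket P (C c) g = 0 := by
  simp [polyBracket, pderiv_C]

lemma pB_C_right (c : ℂ) (g : MvPolynomial σ ℂ) : polyBracket P g (C c) = 0 := by
  simp [polyBracket, pderiv_C]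

lemma pB_mul_left (f g h : MvPolynomial σ ℂ) :
    polyBracket P (f * g) h = f * polyBracket P g h + g * polyBracket P f h := by
  simp only [polyBracket, pderiv_mul, Finset.mul_sum, ← Finset.sum_add_distrib]
  refine Finset.sum_congr rfl fun a _ => Finset.sum_congr rfl fun b _ => ?_
  ring

lemma pB_mul_right (f g h : MvPolynomial σ ℂ) :
    polyBracket P f (g * h) = g * polyBracket P f h + h * polyBracket P f g := by
  simp only [polyBracket, pderiv_mul, Finset.mul_sum, ← Finset.sum_add_distrib]
  refine Finset.sum_congr rfl fun a _ => Finset.sum_congr rfl fun b _ => ?_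
  ring

lemma pB_add_antisymm (hP : ∀ a b, P b a = -P a b) (f g : MvPolynomial σ ℂ) :
    polyBracket P f g + polyBracket P g f = 0 := by
  have h2 : polyBracket P g f = ∑ a : σ, ∑ b : σ, P b a * pderiv b g * pderiv a f :=
    Finset.sum_comm
  rw [polyBracket, h2, ← Finset.sum_add_distrib]
  refine Finset.sum_eq_zero fun a _ => ?_
  rw [← Finset.sum_add_distrib]
  refine Finset.sum_eq_zero fun b _ => ?_
  rw [hP a b]
  ring


/-- The Jacobiator. -/
noncomputable def Jac (f g h : MvPolynomial σ ℂ) : MvPolynomial σ ℂ :=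
  polyBracket P f (polyBracket P g h) + polyBracket P g (polyBracket P h f) +
    polyBracket P h (polyBracket P f g)

lemma Jac_cyclic (f g h : MvPolynomial σ ℂ) : Jac P f g h = Jac P g h f := by
  unfold Jac; ring

lemma Jac_add₁ (f f' g h : MvPolynomial σ ℂ) :
    Jac P (f + f') g h = Jac P f g h + Jac P f' g h := by
  unfold Jac
  simp only [pB_add_left, pB_add_right]
  ring

lemma Jac_C₁ (c : ℂ) (g h : MvPolynomial σ ℂ) : Jac P (C c) g h = 0 := by
  unfold Jac
  simp only [pB_C_left, pB_C_right, pB_zero_right]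
  ring

lemma Jac_mul₁ (hP : ∀ a b, P b a = -P a b) (f f' g h : MvPolynomial σ ℂ) :
    Jac P (f * f') g h = f * Jac P f' g h + f' * Jac P f g h := by
  have h1 := pB_add_antisymm P hP f g
  have h2 := pB_add_antisymm P hP f' g
  unfold Jac
  simp only [pB_mul_left, pB_mul_right, pB_add_right]
  linear_combination (polyBracket P h f') * h1 + (polyBracket P h f) * h2

theorem Jac_eq_zero (hP : ∀ a b, P b a = -P a b)
    (hgen : ∀ a b c : σ, Jac P (X a) (X b) (X c) = 0) (f g h : MvPolynomial σ ℂ) :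
    Jac P f g h = 0 := by
  have J3 : ∀ (a b : σ) (h : MvPolynomial σ ℂ), Jac P (X a) (X b) h = 0 := by
    intro a b h
    induction h using MvPolynomial.induction_on with
    | C c =>
      rw [← Jac_cyclic P (C c) (X a) (X b)]; exact Jac_C₁ P c (X a) (X b)
    | add p q hp hq =>
      rw [← Jac_cyclic P (p + q) (X a) (X b), Jac_add₁, Jac_cyclic P p (X a) (X b),
        Jac_cyclic P q (X a) (X b), hp, hq, add_zero]
    | mul_X p n hp =>
      rw [← Jac_cyclic P (p * X n) (X a) (X b), Jac_mul₁ P hP, Jac_cyclic P p (X a) (X b), hp,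
        Jac_cyclic P (X n) (X a) (X b), hgen, mul_zero, mul_zero, add_zero]
  have J2 : ∀ (a : σ) (g h : MvPolynomial σ ℂ), Jac P (X a) g h = 0 := by
    intro a g h
    induction g using MvPolynomial.induction_on with
    | C c =>
      rw [Jac_cyclic P (X a) (C c) h]; exact Jac_C₁ P c h (X a)
    | add p q hp hq =>
      rw [Jac_cyclic P (X a) (p + q) h, Jac_add₁, ← Jac_cyclic P (X a) p h,
        ← Jac_cyclic P (X a) q h, hp, hq, add_zero]
    | mul_X p n hp =>
      rw [Jac_cyclic P (X a) (p * X n) h, Jac_mul₁ P hP, ← Jac_cyclic P (X a) p h, hp,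
        ← Jac_cyclic P (X a) (X n) h, J3 a n h, mul_zero, mul_zero, add_zero]
  induction f using MvPolynomial.induction_on with
  | C c => exact Jac_C₁ P c g h
  | add p q hp hq => rw [Jac_add₁, hp, hq, add_zero]
  | mul_X p n hp => rw [Jac_mul₁ P hP, hp, J2 n g h, mul_zero, mul_zero, add_zero]

end PBAux

namespace CAux
open StmtC

variable {N : ℕ}

lemma sg_symm (u v : Fin N) : sg u v = -sg v u := by
  unfold sg
  rcases lt_trichotomy u v with h | h | h
  · simp [h, lt_asymm h]
  · simp [h]
  · simp [h, lt_asymm h]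

lemma y_symm (u v : Fin N) : y u v = y v u := by
  unfold y
  rcases le_or_gt u v with h | h
  · rcases eq_or_lt_of_le h with rfl | h'
    · simp
    · rw [dif_pos h, dif_neg (not_le.mpr h')]
  · rw [dif_neg (not_le.mpr h), dif_pos h.le]

/-- Canonical index of the pair `(u,v)`. -/
noncomputable def cIdx (u v : Fin N) : Idx N :=
  if h : u ≤ v then ⟨(u, v), h⟩ else ⟨(v, u), le_of_not_ge h⟩

lemma y_X (u v : Fin N) : y u v = X (cIdx u v) := by
  unfold y cIdx
  split_ifs <;> rfl

/-- The bracket of generators, as a function of four indices. -/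
noncomputable def PP (i j u v : Fin N) : MvPolynomial (Idx N) ℂ :=
  C (sg i v + sg j u) * y i u * y j v + C (sg i u + sg j v) * y i v * y j u

lemma PP_swap (i j u v : Fin N) : PP i j v u = PP i j u v := by
  unfold PP; ring

lemma P_pair (i j l m : Fin N) (hij : i ≤ j) (hlm : l ≤ m) :
    P (⟨(i, j), hij⟩ : Idx N) (⟨(l, m), hlm⟩ : Idx N) = PP i j l m := rfl

lemma P_cIdx (i j u v : Fin N) (hij : i ≤ j) :
    P (⟨(i, j), hij⟩ : Idx N) (cIdx u v) = PP i j u v := by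
  unfold cIdx
  split_ifs with h
  · rfl
  · exact (PP_swap i j v u).symm ▸ (rfl : P (⟨(i, j), hij⟩ : Idx N) ⟨(v, u), _⟩ = PP i j v u)

lemma P_skew : ∀ a b : Idx N, P b a = -P a b := by
  rintro ⟨⟨i, j⟩, hij⟩ ⟨⟨l, m⟩, hlm⟩
  show PP l m i j = -PP i j l m
  unfold PP
  rw [sg_symm l j, sg_symm m i, sg_symm l i, sg_symm m j,
    y_symm l i, y_symm m j, y_symm l j, y_symm m i]
  simp only [map_add, map_neg]
  ring

lemma pB_X_left (a : Idx N) (g : MvPolynomial (Idx N) ℂ) :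
    polyBracket P (X a) g = ∑ d : Idx N, P a d * pderiv d g := by
  rw [polyBracket, Finset.sum_eq_single a]
  · exact Finset.sum_congr rfl fun b _ => by rw [pderiv_X_self, mul_one]
  · intro b _ hb
    refine Finset.sum_eq_zero fun d _ => ?_
    rw [pderiv_X_of_ne (Ne.symm hb), mul_zero, zero_mul]
  · intro ha; exact absurd (Finset.mem_univ a) ha

lemma sum_mul_pderiv_y (F : Idx N → MvPolynomial (Idx N) ℂ) (u v : Fin N) :
    (∑ d : Idx N, F d * pderiv d (y u v)) = F (cIdx u v) := by
  rw [y_X, Finset.sum_eq_single (cIdx u v)]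
  · rw [pderiv_X_self, mul_one]
  · intro b _ hb
    rw [pderiv_X_of_ne (Ne.symm hb), mul_zero]
  · intro ha; exact absurd (Finset.mem_univ _) ha

lemma pB_X_X (a b : Idx N) : polyBracket P (X a) (X b) = P a b := by
  rw [pB_X_left, Finset.sum_eq_single b]
  · rw [pderiv_X_self, mul_one]
  · intro d _ hd
    rw [pderiv_X_of_ne (Ne.symm hd), mul_zero]
  · intro ha; exact absurd (Finset.mem_univ _) ha

/-- `{y_ij, {y_lm, y_pq}}` fully expanded. -/
noncomputable def EXPR (i j l m p q : Fin N) : MvPolynomial (Idx N) ℂ :=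
  C (sg l q + sg m p) * (PP i j l p * y m q + y l p * PP i j m q) +
    C (sg l p + sg m q) * (PP i j l q * y m p + y l q * PP i j m p)

lemma pB_X_PP (i j l m p q : Fin N) (hij : i ≤ j) :
    polyBracket P (X (⟨(i, j), hij⟩ : Idx N)) (PP l m p q) = EXPR i j l m p q := by
  rw [pB_X_left]
  have expand : ∀ d : Idx N,
      P (⟨(i, j), hij⟩ : Idx N) d * pderiv d (PP l m p q) =
        (C (sg l q + sg m p) * y m q * P (⟨(i, j), hij⟩ : Idx N) d) * pderiv d (y l p) +
        ((C (sg l q + sg m p) * y l p * P (⟨(i, j), hij⟩ : Idx N) d) * pderiv d (y m q) +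
        ((C (sg l p + sg m q) * y m p * P (⟨(i, j), hij⟩ : Idx N) d) * pderiv d (y l q) +
        (C (sg l p + sg m q) * y l q * P (⟨(i, j), hij⟩ : Idx N) d) * pderiv d (y m p))) := by
    intro d
    simp only [PP, map_add, pderiv_mul, pderiv_C, zero_mul, zero_add]
    ring
  simp only [expand]
  rw [Finset.sum_add_distrib, Finset.sum_add_distrib, Finset.sum_add_distrib,
    sum_mul_pderiv_y, sum_mul_pderiv_y, sum_mul_pderiv_y, sum_mul_pderiv_y,
    P_cIdx, P_cIdx, P_cIdx, P_cIdx]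
  unfold EXPR
  ring

end CAux


namespace CAux2
open StmtC CAux

variable {N : ℕ}

lemma G_one (a b c : Fin N) (h : ¬(a = b ∧ b = c)) :
    sg a b * sg a c - sg a b * sg b c + sg a c * sg b c = 1 := by
  simp only [sg, Fin.lt_def]
  simp only [Fin.ext_iff] at h
  split_ifs
  all_goals try norm_num
  all_goals exfalso
  all_goals omega

lemma Klem (i j l m p q : Fin N) :
    (C (sg i m) * C (sg i p) - C (sg i m) * C (sg m p) + C (sg i p) * C (sg m p)
      - (C (sg j l) * C (sg j q) - C (sg j l) * C (sg l q) + C (sg j q) * C (sg l q)))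
    * (y i l * y j p * y m q - y i q * y j m * y l p) = (0 : MvPolynomial (Idx N) ℂ) := by
  by_cases h1 : i = m ∧ m = p
  · obtain ⟨rfl, rfl⟩ := h1
    rw [y_symm l i]
    ring
  · by_cases h2 : j = l ∧ l = q
    · obtain ⟨rfl, rfl⟩ := h2
      rw [y_symm m j]
      ring
    · have g1 := G_one i m p h1
      have g2 := G_one j l q h2
      simp only [← map_mul, ← map_sub, ← map_add]
      rw [g1, g2]
      simp

lemma key (i j l m p q : Fin N) :
    EXPR i j l m p q + EXPR l m p q i j + EXPR p q i j l m = (0 : MvPolynomial (Idx N) ℂ) := by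
  unfold EXPR PP
  rw [sg_symm l i, sg_symm l j, sg_symm m i, sg_symm m j, sg_symm p i, sg_symm p j,
    sg_symm p l, sg_symm p m, sg_symm q i, sg_symm q j, sg_symm q l, sg_symm q m,
    y_symm l i, y_symm l j, y_symm m i, y_symm m j, y_symm p i, y_symm p j,
    y_symm p l, y_symm p m, y_symm q i, y_symm q j, y_symm q l, y_symm q m]
  simp only [map_add, map_neg]
  linear_combination Klem i j l m p q + Klem i j l m q p + Klem i j m l p q + Klem i j m l q p

lemma Jgen : ∀ a b c : Idx N, PBAux.Jac P (X a) (X b) (X c) = 0 := by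
  rintro ⟨⟨i, j⟩, hij⟩ ⟨⟨l, m⟩, hlm⟩ ⟨⟨p, q⟩, hpq⟩
  unfold PBAux.Jac
  rw [pB_X_X, pB_X_X, pB_X_X, P_pair, P_pair, P_pair, pB_X_PP, pB_X_PP, pB_X_PP]
  exact key i j l m p q

end CAux2

/-- For `N ≥ 1`, the bracket on `ℂ[y_{ij} : 1 ≤ i ≤ j ≤ N]` (coordinates on symmetric
matrices, with `y_{ji} = y_{ij}`) determined by
`{y_{ij}, y_{lm}} = (sign(m−i) + sign(l−j))·y_{il}y_{jm} + (sign(l−i) + sign(m−j))·y_{im}y_{jl}`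
satisfies the Jacobi identity, i.e. it is a Poisson bracket (the quasiclassical limit of
Noumi's quantum symmetric matrices). -/
theorem jacobi_quantum_symmetric_matrices (N : ℕ) (hN : 1 ≤ N)
    (f g h : MvPolynomial (StmtC.Idx N) ℂ) :
    polyBracket StmtC.P f (polyBracket StmtC.P g h) +
      polyBracket StmtC.P g (polyBracket StmtC.P h f) +
      polyBracket StmtC.P h (polyBracket StmtC.P f g) = 0 := by
  exact PBAux.Jac_eq_zero StmtC.P CAux.P_skew CAux2.Jgen f g h
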